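/- Let G be a group with a surjective homomorphism φ : G ↠ ℤ whose kernel K is abelian, and fix a splitting α : ℤ → G of φ. Let S be a generating set for G symmetrized about ℤ, F_S the free group on S, and π : F_S ↠ G the natural projection. Then for every w ∈ F_S with π(w) ∈ K, we have π(w) = π( (w̄)⁻¹ ), where w̄ denotes the letterwise bar involution of w. -/
import Mathlib


/-- Let `G` be a group with a surjective homomorphism `φ : G ↠ ℤ`
with abelian kernel `K`, and fix a splitting `α` of `φ`. Let `S` be a generating set
for `G` symmetrized about `ℤ`, so that the bar involution `g ↦ α(φ g)·g⁻¹·α(φ g)`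
(sending `α(n)k` to `α(n)k⁻¹`) preserves `S ∪ S⁻¹`. Then for every word `w` in
`S ∪ S⁻¹` with `π(w) ∈ K`, one has `π(w) = π((w̄)⁻¹)`, where `w̄` is the letterwise
bar of `w`; equivalently, the product of the bars of the letters of `w` equals
`π(w)⁻¹`. -/
theorem bar_involution_prod {G : Type*} [Group G] (φ : G → ℤ)
    (hφmul : ∀ x y : G, φ (x * y) = φ x + φ y) (hφsurj : Function.Surjective φ)
    (hker : ∀ x y : G, φ x = 0 → φ y = 0 → x * y = y * x)
    (α : ℤ → G) (hαadd : ∀ m n : ℤ, α (m + n) = α m * α n)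
    (hαsplit : ∀ n : ℤ, φ (α n) = n)
    (S : Set G) (hSgen : Subgroup.closure S = ⊤)
    (hsym : ∀ s : G, (s ∈ S ∨ s⁻¹ ∈ S) →
      ((α (φ s) * s⁻¹ * α (φ s)) ∈ S ∨ (α (φ s) * s⁻¹ * α (φ s))⁻¹ ∈ S)) :
    ∀ l : List G, (∀ x ∈ l, x ∈ S ∨ x⁻¹ ∈ S) → φ l.prod = 0 →
      (l.map (fun g => α (φ g) * g⁻¹ * α (φ g))).prod = (l.prod)⁻¹ := by
  have hφone : φ 1 = 0 := by
    have := hφmul 1 1; simp at this; omega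
  have hφinv : ∀ x : G, φ x⁻¹ = -φ x := by
    intro x
    have := hφmul x x⁻¹
    simp [hφone] at this; omega
  have hα0 : α 0 = 1 := by
    have h := hαadd 0 0
    simp at h
    exact h
  have key : ∀ l : List G,
      (l.map (fun g => α (φ g) * g⁻¹ * α (φ g))).prod
        = α (φ l.prod) * (l.prod)⁻¹ * α (φ l.prod) := by
    intro l
    induction l with
    | nil => simp [hφone, hα0]
    | cons g t ih =>
      simp only [List.map_cons, List.prod_cons, ih]
      have hφprod : φ (g * t.prod) = φ g + φ t.prod := hφmul g t.prod
      set a := φ g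
      set M := φ t.prod
      rw [hφprod, hαadd a M, mul_inv_rev]
      have hk : (g⁻¹ * α a) * (α M * t.prod⁻¹) = (α M * t.prod⁻¹) * (g⁻¹ * α a) := by
        apply hker
        · rw [hφmul, hφinv, hαsplit]; omega
        · rw [hφmul, hφinv, hαsplit]; omega
      calc α a * g⁻¹ * α a * (α M * t.prod⁻¹ * α M)
          = α a * ((g⁻¹ * α a) * (α M * t.prod⁻¹)) * α M := by group
        _ = α a * ((α M * t.prod⁻¹) * (g⁻¹ * α a)) * α M := by rw [hk]
        _ = α a * α M * (t.prod⁻¹ * g⁻¹) * (α a * α M) := by group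
  intro l _ h0
  rw [key l, h0, hα0, one_mul, mul_one]
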